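/- Let k ≥ 1, let a_1 > a_2 > ⋯ > a_k ≥ 0 be non-negative integers, let r ≥ a_1 + 1, set b_j = r − 1 − a_{k+1−j}, and let λ be the partition with Frobenius coordinates (a_1,…,a_k | b_1,…,b_k). Fix p with 1 ≤ p ≤ k and let H = {(x,y) ∈ Y_λ : x ≥ p, y ≥ k+1−p, (x+1,y+1) ∉ Y_λ} be the rim hook of λ at the cell (p, k+1−p). Then Y_λ \ H is the Young diagram of the partition μ with Frobenius coordinates (a_1,…,a_{p−1},a_{p+1},…,a_k | b_1,…,b_{k−p},b_{k−p+2},…,b_k), i.e., the coordinates obtained by omitting a_p from the arm sequence and b_{k+1−p} = r−1−a_p from the leg sequence. -/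
import Mathlib


/-- The rim hook of a Young diagram `μ` at a cell `c = (i, j)`:
the set of cells `(a, b) ∈ μ` with `a ≥ i`, `b ≥ j` and `(a+1, b+1) ∉ μ`. -/
def YoungDiagram.rimHook (μ : YoungDiagram) (c : ℕ × ℕ) : Finset (ℕ × ℕ) :=
  μ.cells.filter (fun x => c.1 ≤ x.1 ∧ c.2 ≤ x.2 ∧ (x.1 + 1, x.2 + 1) ∉ μ.cells)


def removeHookAux (μ : YoungDiagram) (p t : ℕ) : YoungDiagram where
  cells := μ.cells.filter (fun c => c.1 < p ∨ c.2 < t ∨ (c.1 + 1, c.2 + 1) ∈ μ)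
  isLowerSet := by
    intro c2 c1 hle h2
    simp only [Finset.coe_filter, Set.mem_setOf_eq, YoungDiagram.mem_cells] at *
    obtain ⟨hm, hc⟩ := h2
    refine ⟨μ.isLowerSet hle hm, ?_⟩
    rcases Nat.lt_or_ge c1.1 p with h | h
    · exact Or.inl h
    rcases Nat.lt_or_ge c1.2 t with h' | h'
    · exact Or.inr (Or.inl h')
    have h1 : c1.1 ≤ c2.1 := hle.1
    have h2' : c1.2 ≤ c2.2 := hle.2
    have hc2 : (c2.1 + 1, c2.2 + 1) ∈ μ := by
      rcases hc with h'' | h'' | h''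
      · omega
      · omega
      · exact h''
    exact Or.inr (Or.inr (μ.isLowerSet (Prod.mk_le_mk.2 ⟨by omega, by omega⟩) hc2))

lemma mem_removeHookAux {μ : YoungDiagram} {p t : ℕ} {c : ℕ × ℕ} :
    c ∈ removeHookAux μ p t ↔ c ∈ μ ∧ (c.1 < p ∨ c.2 < t ∨ (c.1 + 1, c.2 + 1) ∈ μ) := by
  show c ∈ (removeHookAux μ p t).cells ↔ _
  simp [removeHookAux, Finset.mem_filter, YoungDiagram.mem_cells]

lemma rowLen_eq_of {ν : YoungDiagram} {i n : ℕ} (h : ∀ m, (i, m) ∈ ν ↔ m < n) :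
    ν.rowLen i = n := by
  have h1 : ¬ n < ν.rowLen i := by
    rw [← YoungDiagram.mem_iff_lt_rowLen, h]; omega
  rcases n with _ | m
  · omega
  · have h2 : m < ν.rowLen i := YoungDiagram.mem_iff_lt_rowLen.1 ((h m).2 (by omega))
    omega

lemma colLen_eq_of {ν : YoungDiagram} {j n : ℕ} (h : ∀ m, (m, j) ∈ ν ↔ m < n) :
    ν.colLen j = n := by
  have h1 : ¬ n < ν.colLen j := by
    rw [← YoungDiagram.mem_iff_lt_colLen, h]; omega
  rcases n with _ | m
  · omega
  · have h2 : m < ν.colLen j := YoungDiagram.mem_iff_lt_colLen.1 ((h m).2 (by omega))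
    omega

lemma aux_dec {k : ℕ} {a : ℕ → ℕ} (ha : ∀ i j : ℕ, i < j → j < k → a j < a i) :
    ∀ d i, i + d < k → a (i + d) + d ≤ a i := by
  intro d
  induction d with
  | zero => intro i _; simp
  | succ d ih =>
    intro i h
    have h1 : a (i + d + 1) < a (i + d) := ha (i + d) (i + d + 1) (by omega) (by omega)
    have h2 := ih i (by omega)
    have h3 : i + (d + 1) = i + d + 1 := rfl
    rw [h3]
    omega

/-- **Removing a hook of length `r` from a symmetric Frobenius-coordinate partition.**
Let `k ≥ 1`, let `a 0 > a 1 > ⋯ > a (k−1) ≥ 0` (0-indexed) be strictly decreasing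
non-negative integers, let `r ≥ a 0 + 1`, set `b j = r − 1 − a (k−1−j)`, and let `μ` be
the partition with Frobenius coordinates `(a | b)`, i.e. `μ` has Durfee square size `k`
(0-indexed: `(k−1, k−1) ∈ μ`, `(k, k) ∉ μ`) with `μ.rowLen i = a i + i + 1`,
`μ.colLen j = b j + j + 1` for `i, j < k`.  Fix `p < k` (0-indexed) and let `H` be the
rim hook of `μ` at the cell `(p, k−1−p)`.  Then `μ \ H` is the Young diagram `ν` of the
partition with Frobenius coordinates obtained from `(a | b)` by omitting `a p` from the
arm sequence and `b (k−1−p) = r − 1 − a p` from the leg sequence: `ν` has Durfee square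
size `k − 1` with `ν.rowLen i = (if i < p then a i else a (i+1)) + i + 1` and
`ν.colLen j = (if j < k−1−p then b j else b (j+1)) + j + 1` for `i, j < k − 1`. -/
theorem sdiff_rimHook_of_frobenius_symmetric (k r : ℕ) (hk : 1 ≤ k) (a b : ℕ → ℕ)
    (ha : ∀ i j : ℕ, i < j → j < k → a j < a i) (hr : a 0 + 1 ≤ r)
    (hb : ∀ j : ℕ, j < k → b j = r - 1 - a (k - 1 - j))
    (μ : YoungDiagram)
    (hd₁ : (k - 1, k - 1) ∈ μ) (hd₂ : (k, k) ∉ μ)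
    (hrow : ∀ i : ℕ, i < k → μ.rowLen i = a i + i + 1)
    (hcol : ∀ j : ℕ, j < k → μ.colLen j = b j + j + 1)
    (p : ℕ) (hp : p < k) :
    ∃ ν : YoungDiagram,
      ν.cells = μ.cells \ μ.rimHook (p, k - 1 - p) ∧
      (2 ≤ k → (k - 2, k - 2) ∈ ν) ∧ (k - 1, k - 1) ∉ ν ∧
      (∀ i : ℕ, i < k - 1 → ν.rowLen i = (if i < p then a i else a (i + 1)) + i + 1) ∧
      (∀ j : ℕ, j < k - 1 →
        ν.colLen j = (if j < k - 1 - p then b j else b (j + 1)) + j + 1) := by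
  refine ⟨removeHookAux μ p (k - 1 - p), ?_, ?_, ?_, ?_, ?_⟩
  · ext c
    simp only [removeHookAux, YoungDiagram.rimHook, Finset.mem_filter, Finset.mem_sdiff,
      YoungDiagram.mem_cells]
    by_cases hP : (c.1 + 1, c.2 + 1) ∈ μ <;> by_cases hm : c ∈ μ <;>
      simp [hP, hm] <;> omega
  · intro h2
    rw [mem_removeHookAux]
    refine ⟨?_, Or.inr (Or.inr ?_)⟩
    · exact μ.isLowerSet (Prod.mk_le_mk.2 ⟨by omega, by omega⟩) hd₁
    · simpa using (show (k - 2 + 1, k - 2 + 1) = ((k:ℕ) - 1, k - 1) from by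
        simp; omega) ▸ hd₁
  · rw [mem_removeHookAux]
    rintro ⟨-, h | h | h⟩
    · omega
    · omega
    · apply hd₂
      have : ((k:ℕ) - 1 + 1, k - 1 + 1) = (k, k) := by simp; omega
      rwa [this] at h
  · intro i hi
    rcases Nat.lt_or_ge i p with hip | hip
    · rw [if_pos hip]
      apply rowLen_eq_of
      intro m
      rw [mem_removeHookAux]
      simp only
      rw [YoungDiagram.mem_iff_lt_rowLen, hrow i (by omega)]
      constructor
      · exact fun h => h.1
      · exact fun h => ⟨h, Or.inl hip⟩
    · rw [if_neg (by omega)]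
      apply rowLen_eq_of
      intro m
      rw [mem_removeHookAux]
      simp only
      rw [YoungDiagram.mem_iff_lt_rowLen, YoungDiagram.mem_iff_lt_rowLen,
        hrow i (by omega), hrow (i + 1) (by omega)]
      have hf1 : a (i + 1) < a i := ha i (i + 1) (by omega) (by omega)
      have hf2 := aux_dec ha (k - 2 - i) (i + 1) (by omega)
      rw [show (i + 1) + (k - 2 - i) = k - 1 from by omega] at hf2
      omega
  · intro j hj
    rcases Nat.lt_or_ge j (k - 1 - p) with hjp | hjp
    · rw [if_pos hjp]
      apply colLen_eq_of
      intro m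
      rw [mem_removeHookAux]
      simp only
      rw [YoungDiagram.mem_iff_lt_colLen, hcol j (by omega)]
      constructor
      · exact fun h => h.1
      · exact fun h => ⟨h, Or.inr (Or.inl hjp)⟩
    · rw [if_neg (by omega)]
      apply colLen_eq_of
      intro m
      rw [mem_removeHookAux]
      simp only
      rw [YoungDiagram.mem_iff_lt_colLen, YoungDiagram.mem_iff_lt_colLen,
        hcol j (by omega), hcol (j + 1) (by omega)]
      have hbj := hb j (by omega)
      have hbj1 := hb (j + 1) (by omega)
      rw [show k - 1 - (j + 1) = k - 2 - j from by omega] at hbj1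
      -- a (k-1-j) < a (k-2-j) (if k-2-j < k-1-j, i.e. j < k-1 : yes)
      have hg1 : a (k - 1 - j) < a (k - 2 - j) ∨ k - 2 - j = k - 1 - j := by
        rcases Nat.lt_or_ge (k - 2 - j) (k - 1 - j) with h | h
        · exact Or.inl (ha (k - 2 - j) (k - 1 - j) h (by omega))
        · exact Or.inr (by omega)
      have hg2 := aux_dec ha (k - 2 - j) 0 (by omega)
      rw [show 0 + (k - 2 - j) = k - 2 - j from by omega] at hg2
      have hg3 := aux_dec ha (k - 1 - j) 0 (by omega)
      rw [show 0 + (k - 1 - j) = k - 1 - j from by omega] at hg3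
      omega
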